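/- For all integers k ≥ 2 and 0 ≤ ℓ ≤ k − 2, the integral ∫_{ℂ²} |z_1|^{2k} |z_2|^{2ℓ} (|z_1|⁴ + 2|z_1|² + |z_2|² + 1) exp(−(½|z_1|⁴ + |z_1|²|z_2|² + |z_1|²)) dλ(z_1, z_2) is finite; that is, the monomial z_1^k z_2^ℓ belongs to the weighted Bergman space A²(ℂ², h, e^{−ψ}) of the Kähler metric with potential χ(z_1,z_2) = ¼|z_1|⁴ + |z_1|²|z_2|² + |z_1|² + |z_2|² and weight ψ(z_1,z_2) = ½|z_1|⁴ + |z_1|²|z_2|² + |z_1|². -/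

import Mathlib

open Complex MeasureTheory Finset
open scoped ENNReal

noncomputable section

/-- The density `e^{−ψ} det(h) = (|z₁|⁴ + 2|z₁|² + |z₂|² + 1)
exp(−(½|z₁|⁴ + |z₁|²|z₂|² + |z₁|²))` of the weighted Bergman space on `ℂ²`
with Kähler potential `¼|z₁|⁴ + |z₁|²|z₂|² + |z₁|² + |z₂|²` and weight
`½|z₁|⁴ + |z₁|²|z₂|² + |z₁|²`. -/
def bergW (z : Fin 2 → ℂ) : ℝ :=
  ((Complex.normSq (z 0)) ^ 2 + 2 * Complex.normSq (z 0) +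
      Complex.normSq (z 1) + 1) *
    Real.exp (-((1 / 2) * (Complex.normSq (z 0)) ^ 2 +
      Complex.normSq (z 0) * Complex.normSq (z 1) + Complex.normSq (z 0)))

namespace Stmt15Aux

lemma mns : Measurable (fun z : ℂ => Complex.normSq z) :=
  Complex.continuous_normSq.measurable

lemma pow_le_factorial_mul_exp {x : ℝ} (hx : 0 ≤ x) (m : ℕ) :
    x ^ m ≤ m.factorial * Real.exp x := by
  have h1 : x ^ m / m.factorial ≤ ∑ i ∈ Finset.range (m + 1), x ^ i / i.factorial := by
    refine Finset.single_le_sum (f := fun i => x ^ i / (i.factorial : ℝ)) ?_ ?_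
    · intro i _; positivity
    · exact Finset.mem_range.mpr (Nat.lt_succ_self m)
  have h2 := Real.sum_le_exp_of_nonneg hx (m + 1)
  have hm : (0 : ℝ) < m.factorial := by positivity
  calc x ^ m = m.factorial * (x ^ m / m.factorial) := by field_simp
    _ ≤ m.factorial * Real.exp x :=
        mul_le_mul_of_nonneg_left (h1.trans h2) hm.le

lemma integrable_exp_neg_mul_normSq {b : ℝ} (hb : 0 < b) :
    Integrable (fun z : ℂ => Real.exp (-(b * Complex.normSq z))) := by
  have hmp := Complex.volume_preserving_equiv_real_prod.symm
  rw [← hmp.integrable_comp_emb (MeasurableEquiv.measurableEmbedding _)]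
  have heq : ((fun z : ℂ => Real.exp (-(b * Complex.normSq z))) ∘
      Complex.measurableEquivRealProd.symm) =
      fun p : ℝ × ℝ => Real.exp (-b * p.1 ^ 2) * Real.exp (-b * p.2 ^ 2) := by
    funext p
    simp only [Function.comp_apply]
    rw [← Real.exp_add]
    congr 1
    have h2 : Complex.normSq (Complex.measurableEquivRealProd.symm p) = p.1 ^ 2 + p.2 ^ 2 := by
      rw [Complex.measurableEquivRealProd_symm_apply]
      simp [Complex.normSq_apply]; ring
    rw [h2]; ring
  rw [heq]
  exact (integrable_exp_neg_mul_sq hb).mul_prod (integrable_exp_neg_mul_sq hb)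

lemma integrableA {s : ℝ} (hs : 0 < s) (m : ℕ) :
    Integrable (fun z : ℂ => Complex.normSq z ^ m * Real.exp (-(s * Complex.normSq z))) := by
  refine Integrable.mono'
    (((integrable_exp_neg_mul_normSq (b := s / 2) (by linarith)).const_mul
      ((2 / s) ^ m * m.factorial))) ?_ ?_
  · exact ((mns.pow_const m).mul ((mns.const_mul s).neg.exp)).aestronglyMeasurable
  · refine Filter.Eventually.of_forall (fun z => ?_)
    have ht : (0 : ℝ) ≤ Complex.normSq z := Complex.normSq_nonneg z
    set t := Complex.normSq z with htdef
    have h0 : (0:ℝ) ≤ t ^ m * Real.exp (-(s * t)) := by positivity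
    rw [Real.norm_of_nonneg h0]
    have key : (s * t / 2) ^ m ≤ m.factorial * Real.exp (s * t / 2) :=
      pow_le_factorial_mul_exp (by positivity) m
    have hts : t ^ m = (2 / s) ^ m * (s * t / 2) ^ m := by
      rw [← mul_pow]; congr 1; field_simp
    have h1 : t ^ m ≤ (2 / s) ^ m * m.factorial * Real.exp (s * t / 2) := by
      rw [hts, mul_assoc]
      exact mul_le_mul_of_nonneg_left key (by positivity)
    calc t ^ m * Real.exp (-(s * t))
        ≤ ((2 / s) ^ m * m.factorial * Real.exp (s * t / 2)) * Real.exp (-(s * t)) :=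
          mul_le_mul_of_nonneg_right h1 (Real.exp_nonneg _)
      _ = (2 / s) ^ m * m.factorial * Real.exp (-(s / 2 * t)) := by
          have hx : Real.exp (s * t / 2) * Real.exp (-(s * t)) = Real.exp (-(s / 2 * t)) := by
            rw [← Real.exp_add]; congr 1; ring
          rw [mul_assoc, hx]

/-- The basic radial moment lintegral. -/
def J (s : ℝ) (m : ℕ) : ℝ≥0∞ :=
  ∫⁻ z : ℂ, ENNReal.ofReal (Complex.normSq z ^ m * Real.exp (-(s * Complex.normSq z)))

lemma J_meas (s : ℝ) (m : ℕ) :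
    Measurable (fun z : ℂ =>
      ENNReal.ofReal (Complex.normSq z ^ m * Real.exp (-(s * Complex.normSq z)))) :=
  ((mns.pow_const m).mul ((mns.const_mul s).neg.exp)).ennreal_ofReal

lemma J_lt_top {s : ℝ} (hs : 0 < s) (m : ℕ) : J s m < ⊤ :=
  (integrableA hs m).lintegral_lt_top

lemma J_scale {s : ℝ} (hs : 0 < s) (m : ℕ) :
    J s m = ENNReal.ofReal (s⁻¹ ^ (m + 1)) * J 1 m := by
  have hr : Real.sqrt s ≠ 0 := by positivity
  have hmap := MeasureTheory.Measure.map_addHaar_smul (volume : Measure ℂ) hr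
  have hcomp : (∫⁻ z : ℂ, ENNReal.ofReal
        (Complex.normSq (Real.sqrt s • z) ^ m *
          Real.exp (-(1 * Complex.normSq (Real.sqrt s • z)))))
      = ENNReal.ofReal |(Real.sqrt s ^ Module.finrank ℝ ℂ)⁻¹| * J 1 m := by
    rw [← MeasureTheory.lintegral_map (J_meas 1 m) (measurable_const_smul _), hmap,
      lintegral_smul_measure]
    rfl
  have hns : ∀ z : ℂ, Complex.normSq (Real.sqrt s • z) = s * Complex.normSq z := by
    intro z
    rw [Complex.real_smul, Complex.normSq_mul, Complex.normSq_ofReal,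
      Real.mul_self_sqrt hs.le]
  have hlhs : ∀ z : ℂ, ENNReal.ofReal
        (Complex.normSq (Real.sqrt s • z) ^ m *
          Real.exp (-(1 * Complex.normSq (Real.sqrt s • z))))
      = ENNReal.ofReal (s ^ m) *
        ENNReal.ofReal (Complex.normSq z ^ m * Real.exp (-(s * Complex.normSq z))) := by
    intro z
    rw [← ENNReal.ofReal_mul (by positivity)]
    congr 1
    rw [hns z, one_mul, mul_pow]
    ring
  simp only [hlhs] at hcomp
  rw [lintegral_const_mul _ (J_meas s m)] at hcomp
  have hfr : Module.finrank ℝ ℂ = 2 := Complex.finrank_real_complex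
  rw [hfr] at hcomp
  have habs : |((Real.sqrt s) ^ 2)⁻¹| = s⁻¹ := by
    rw [Real.sq_sqrt hs.le]; exact abs_of_nonneg (by positivity)
  rw [habs] at hcomp
  have hsm : ENNReal.ofReal (s ^ m) ≠ 0 := by
    simp [ENNReal.ofReal_eq_zero, not_le, pow_pos hs]
  have hsm' : ENNReal.ofReal (s ^ m) ≠ ⊤ := ENNReal.ofReal_ne_top
  have hJ : J s m = (ENNReal.ofReal (s ^ m))⁻¹ * (ENNReal.ofReal s⁻¹ * J 1 m) := by
    rw [← hcomp, ← mul_assoc, ENNReal.inv_mul_cancel hsm hsm', one_mul]; rfl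
  have hofr : (ENNReal.ofReal (s ^ m))⁻¹ * ENNReal.ofReal s⁻¹ = ENNReal.ofReal (s⁻¹ ^ (m+1)) := by
    rw [← ENNReal.ofReal_inv_of_pos (pow_pos hs m), ← ENNReal.ofReal_mul (by positivity)]
    congr 1
    rw [← inv_pow, pow_succ]
  rw [hJ, ← mul_assoc, hofr]

end Stmt15Aux

open Stmt15Aux

/-- for `k ≥ 2` and `0 ≤ ℓ ≤ k − 2` the monomial `z₁^k z₂^ℓ`
belongs to the weighted Bergman space: its squared norm
`∫ |z₁|^{2k} |z₂|^{2ℓ} e^{−ψ} det(h) dλ` is finite. -/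
theorem stmt15 (k ℓ : ℕ) (hk : 2 ≤ k) (hℓ : ℓ + 2 ≤ k) :
    (∫⁻ z : Fin 2 → ℂ,
      ENNReal.ofReal
        ((Complex.normSq (z 0)) ^ k * (Complex.normSq (z 1)) ^ ℓ * bergW z)
      ∂volume) < ⊤ := by
  obtain ⟨a, hka⟩ : ∃ a, k = ℓ + 2 + a := ⟨k - (ℓ + 2), by omega⟩
  -- the integrand as a function of two complex variables
  set F : ℂ × ℂ → ℝ≥0∞ := fun p =>
    ENNReal.ofReal ((Complex.normSq p.1) ^ k * (Complex.normSq p.2) ^ ℓ *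
      (((Complex.normSq p.1) ^ 2 + 2 * Complex.normSq p.1 + Complex.normSq p.2 + 1) *
        Real.exp (-((1 / 2) * (Complex.normSq p.1) ^ 2 +
          Complex.normSq p.1 * Complex.normSq p.2 + Complex.normSq p.1)))) with hFdef
  have h1m : Measurable fun p : ℂ × ℂ => Complex.normSq p.1 := mns.comp measurable_fst
  have h2m : Measurable fun p : ℂ × ℂ => Complex.normSq p.2 := mns.comp measurable_snd
  have hFmeas : Measurable F := by
    apply Measurable.ennreal_ofReal
    exact (((h1m.pow_const k).mul (h2m.pow_const ℓ)).mul
      (((((h1m.pow_const 2).add (h1m.const_mul 2)).add h2m).add measurable_const).mul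
        ((((h1m.pow_const 2).const_mul (1/2)).add (h1m.mul h2m)).add h1m).neg.exp))
  -- reduce to a product integral
  have hstep1 : (∫⁻ z : Fin 2 → ℂ,
      ENNReal.ofReal
        ((Complex.normSq (z 0)) ^ k * (Complex.normSq (z 1)) ^ ℓ * bergW z)
      ∂volume) = ∫⁻ p : ℂ × ℂ, F p ∂((volume : Measure ℂ).prod volume) := by
    have hmp := MeasureTheory.volume_preserving_piFinTwo (fun _ : Fin 2 => ℂ)
    rw [← Measure.volume_eq_prod, ← hmp.lintegral_comp hFmeas]
    rfl
  rw [hstep1, MeasureTheory.lintegral_prod F hFmeas.aemeasurable]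
  -- the inner integral bound
  set D : ℝ≥0∞ := J 1 ℓ + J 1 (ℓ + 1) with hDdef
  have hD : D ≠ ⊤ := by
    simp only [hDdef, ne_eq, ENNReal.add_eq_top, not_or]
    exact ⟨(J_lt_top one_pos ℓ).ne, (J_lt_top one_pos (ℓ+1)).ne⟩
  set Q : ℂ → ℝ≥0∞ := fun z1 =>
    ENNReal.ofReal ((Complex.normSq z1 ^ (a + 3) + 2 * Complex.normSq z1 ^ (a + 2)
      + Complex.normSq z1 ^ (a + 1) + Complex.normSq z1 ^ a) *
      Real.exp (-(1 * Complex.normSq z1))) with hQdef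
  have hQmeas : Measurable Q := by
    apply Measurable.ennreal_ofReal
    exact ((((mns.pow_const (a+3)).add ((mns.pow_const (a+2)).const_mul 2)).add
      (mns.pow_const (a+1))).add (mns.pow_const a)).mul (mns.const_mul 1).neg.exp
  have hinner : ∀ z1 : ℂ, (∫⁻ z2 : ℂ, F (z1, z2)) ≤ Q z1 * D := by
    intro z1
    set s := Complex.normSq z1 with hsdef
    have hs0 : 0 ≤ s := Complex.normSq_nonneg z1
    have hsplit : ∀ z2 : ℂ, F (z1, z2) =
        ENNReal.ofReal ((s ^ k * Real.exp (-(1/2 * s^2 + s))) * (s^2 + 2*s + 1)) *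
          ENNReal.ofReal (Complex.normSq z2 ^ ℓ * Real.exp (-(s * Complex.normSq z2))) +
        ENNReal.ofReal (s ^ k * Real.exp (-(1/2 * s^2 + s))) *
          ENNReal.ofReal (Complex.normSq z2 ^ (ℓ+1) * Real.exp (-(s * Complex.normSq z2))) := by
      intro z2
      set t := Complex.normSq z2 with htdef
      have ht0 : 0 ≤ t := Complex.normSq_nonneg z2
      rw [← ENNReal.ofReal_mul (by positivity), ← ENNReal.ofReal_mul (by positivity),
        ← ENNReal.ofReal_add (by positivity) (by positivity)]
      have hexp : Real.exp (-((1/2) * s^2 + s * t + s)) =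
          Real.exp (-(1/2 * s^2 + s)) * Real.exp (-(s * t)) := by
        rw [← Real.exp_add]; ring_nf
      simp only [hFdef]
      rw [← hsdef, ← htdef]
      rw [hexp]; ring
    calc (∫⁻ z2 : ℂ, F (z1, z2))
        = ENNReal.ofReal ((s ^ k * Real.exp (-(1/2 * s^2 + s))) * (s^2 + 2*s + 1)) * J s ℓ +
          ENNReal.ofReal (s ^ k * Real.exp (-(1/2 * s^2 + s))) * J s (ℓ+1) := by
          simp only [hsplit]
          rw [lintegral_add_left ((J_meas s ℓ).const_mul _),
            lintegral_const_mul _ (J_meas s ℓ), lintegral_const_mul _ (J_meas s (ℓ+1))]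
          rfl
      _ ≤ Q z1 * D := by
          rcases eq_or_lt_of_le hs0 with hs | hs
          · -- s = 0 : the coefficient s^k = 0
            have hz : s ^ k = 0 := by rw [← hs]; exact zero_pow (by omega)
            simp [hz]
          · -- s > 0 : use the scaling formula
            rw [J_scale hs ℓ, J_scale hs (ℓ+1)]
            have hE : Real.exp (-(1/2 * s^2 + s)) ≤ Real.exp (-(1 * s)) :=
              Real.exp_le_exp.mpr (by nlinarith)
            have hterm1 : ENNReal.ofReal ((s ^ k * Real.exp (-(1/2 * s^2 + s))) * (s^2 + 2*s + 1))
                * (ENNReal.ofReal (s⁻¹ ^ (ℓ + 1)) * J 1 ℓ) ≤ Q z1 * J 1 ℓ := by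
              rw [← mul_assoc, ← ENNReal.ofReal_mul (by positivity)]
              refine mul_le_mul_left (ENNReal.ofReal_le_ofReal ?_) _
              have hpowk : s ^ k = s ^ (a+1) * s ^ (ℓ+1) := by
                rw [← pow_add]; congr 1; omega
              have hpow : s ^ k * s⁻¹ ^ (ℓ + 1) = s ^ (a + 1) := by
                rw [hpowk, mul_assoc, ← mul_pow, mul_inv_cancel₀ hs.ne', one_pow, mul_one]
              have hrw : (s ^ k * Real.exp (-(1/2 * s^2 + s))) * (s^2 + 2*s + 1) * s⁻¹ ^ (ℓ+1)
                  = (s^(a+3) + 2*s^(a+2) + s^(a+1)) * Real.exp (-(1/2 * s^2 + s)) := by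
                calc (s ^ k * Real.exp (-(1/2 * s^2 + s))) * (s^2 + 2*s + 1) * s⁻¹ ^ (ℓ+1)
                    = (s ^ k * s⁻¹ ^ (ℓ+1)) * ((s^2 + 2*s + 1) * Real.exp (-(1/2 * s^2 + s))) := by
                      ring
                  _ = s ^ (a+1) * ((s^2 + 2*s + 1) * Real.exp (-(1/2 * s^2 + s))) := by
                      rw [hpow]
                  _ = (s^(a+3) + 2*s^(a+2) + s^(a+1)) * Real.exp (-(1/2 * s^2 + s)) := by ring
              rw [hrw]
              have hp3 : (0:ℝ) ≤ s^(a+3) + 2*s^(a+2) + s^(a+1) := by positivity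
              calc (s^(a+3) + 2*s^(a+2) + s^(a+1)) * Real.exp (-(1/2 * s^2 + s))
                  ≤ (s^(a+3) + 2*s^(a+2) + s^(a+1)) * Real.exp (-(1 * s)) :=
                    mul_le_mul_of_nonneg_left hE hp3
                _ ≤ (s^(a+3) + 2*s^(a+2) + s^(a+1) + s^a) * Real.exp (-(1 * s)) := by
                    have : (0:ℝ) ≤ s^a := by positivity
                    have he : (0:ℝ) ≤ Real.exp (-(1 * s)) := Real.exp_nonneg _
                    nlinarith
            have hterm2 : ENNReal.ofReal (s ^ k * Real.exp (-(1/2 * s^2 + s)))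
                * (ENNReal.ofReal (s⁻¹ ^ (ℓ + 1 + 1)) * J 1 (ℓ+1)) ≤ Q z1 * J 1 (ℓ+1) := by
              rw [← mul_assoc, ← ENNReal.ofReal_mul (by positivity)]
              refine mul_le_mul_left (ENNReal.ofReal_le_ofReal ?_) _
              have hpowk : s ^ k = s ^ a * s ^ (ℓ+2) := by
                rw [← pow_add]; congr 1; omega
              have hpow : s ^ k * s⁻¹ ^ (ℓ + 2) = s ^ a := by
                rw [hpowk, mul_assoc, ← mul_pow, mul_inv_cancel₀ hs.ne', one_pow, mul_one]
              have hrw : s ^ k * Real.exp (-(1/2 * s^2 + s)) * s⁻¹ ^ (ℓ+1+1)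
                  = s ^ a * Real.exp (-(1/2 * s^2 + s)) := by
                calc s ^ k * Real.exp (-(1/2 * s^2 + s)) * s⁻¹ ^ (ℓ+1+1)
                    = (s ^ k * s⁻¹ ^ (ℓ+2)) * Real.exp (-(1/2 * s^2 + s)) := by ring_nf
                  _ = s ^ a * Real.exp (-(1/2 * s^2 + s)) := by rw [hpow]
              rw [hrw]
              calc s ^ a * Real.exp (-(1/2 * s^2 + s))
                  ≤ s ^ a * Real.exp (-(1 * s)) :=
                    mul_le_mul_of_nonneg_left hE (by positivity)
                _ ≤ (s^(a+3) + 2*s^(a+2) + s^(a+1) + s^a) * Real.exp (-(1 * s)) := by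
                    have h3 : (0:ℝ) ≤ s^(a+3) := by positivity
                    have h2 : (0:ℝ) ≤ s^(a+2) := by positivity
                    have h1 : (0:ℝ) ≤ s^(a+1) := by positivity
                    have he : (0:ℝ) ≤ Real.exp (-(1 * s)) := Real.exp_nonneg _
                    nlinarith
            calc _ ≤ Q z1 * J 1 ℓ + Q z1 * J 1 (ℓ+1) := add_le_add hterm1 hterm2
              _ = Q z1 * D := by rw [hDdef, mul_add]
  refine lt_of_le_of_lt (lintegral_mono hinner) ?_
  rw [lintegral_mul_const D hQmeas]
  refine ENNReal.mul_lt_top ?_ (lt_top_iff_ne_top.mpr hD)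
  -- finiteness of ∫⁻ Q
  have hQle : ∀ z1 : ℂ, Q z1 ≤
      ENNReal.ofReal 2 *
        (ENNReal.ofReal (Complex.normSq z1 ^ (a+3) * Real.exp (-(1 * Complex.normSq z1))) +
        (ENNReal.ofReal (Complex.normSq z1 ^ (a+2) * Real.exp (-(1 * Complex.normSq z1))) +
        (ENNReal.ofReal (Complex.normSq z1 ^ (a+1) * Real.exp (-(1 * Complex.normSq z1))) +
         ENNReal.ofReal (Complex.normSq z1 ^ a * Real.exp (-(1 * Complex.normSq z1)))))) := by
    intro z1
    set s := Complex.normSq z1 with hsdef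
    have hs0 : 0 ≤ s := Complex.normSq_nonneg z1
    rw [← ENNReal.ofReal_add (by positivity) (by positivity),
      ← ENNReal.ofReal_add (by positivity) (by positivity),
      ← ENNReal.ofReal_add (by positivity) (by positivity),
      ← ENNReal.ofReal_mul (by norm_num)]
    refine ENNReal.ofReal_le_ofReal ?_
    rw [← hsdef]
    have he : (0:ℝ) ≤ Real.exp (-(1 * s)) := Real.exp_nonneg _
    have h3 : (0:ℝ) ≤ s^(a+3) := by positivity
    have h1 : (0:ℝ) ≤ s^(a+1) := by positivity
    have h0 : (0:ℝ) ≤ s^a := by positivity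
    nlinarith [mul_nonneg h3 he, mul_nonneg h1 he, mul_nonneg h0 he]
  refine lt_of_le_of_lt (lintegral_mono hQle) ?_
  rw [lintegral_const_mul' _ _ ENNReal.ofReal_ne_top,
    lintegral_add_left (J_meas 1 (a+3)), lintegral_add_left (J_meas 1 (a+2)),
    lintegral_add_left (J_meas 1 (a+1))]
  have hfin : (J 1 (a+3) + (J 1 (a+2) + (J 1 (a+1) + J 1 a))) < ⊤ := by
    have := J_lt_top one_pos (a+3)
    have := J_lt_top one_pos (a+2)
    have := J_lt_top one_pos (a+1)
    have := J_lt_top one_pos a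
    simp only [lt_top_iff_ne_top, ne_eq, ENNReal.add_eq_top, not_or] at *
    tauto
  exact ENNReal.mul_lt_top (by simp) hfin
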